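/- Let M be a (0,1)-vector of length n with w(M) entries equal to 1, and set t = n + w(M). Then the space C_M of two-colored partitions of R^2 into horizontal strips, where strips labeled 1 in M are additionally cut by a vertical line with the two halves colored oppositely, is Z/2-equivariantly homeomorphic to the sphere S^{t-1}, where the Z/2 action swaps the two colors. -/

import Mathlib

/-- The parameter space attached to one strip: a circle (recording the position of the
vertical cut in `[-∞, ∞]` together with the side that goes to `A`, the two infinities
being glued appropriately) for a strip labelled `1`, and a two-point space (which of
`A`, `B` receives the whole strip) for a strip labelled `0`. -/
def StripData : Bool → Type
  | true => Metric.sphere (0 : ℂ) 1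
  | false => Bool

instance : (b : Bool) → TopologicalSpace (StripData b)
  | true => inferInstanceAs (TopologicalSpace (Metric.sphere (0 : ℂ) 1))
  | false => inferInstanceAs (TopologicalSpace Bool)

/-- Swapping the two colours `A` and `B` on the data of a single strip. -/
noncomputable def stripFlip : (b : Bool) → StripData b → StripData b
  | true, z => show Metric.sphere (0 : ℂ) 1 from -(show Metric.sphere (0 : ℂ) 1 from z)
  | false, c => !c

/-- A configuration describing a member of `C_M`: the monotone sequence of strip
boundaries `⊥ = y 0 ≤ y 1 ≤ ⋯ ≤ y n = ⊤` in `[-∞, ∞]`, together with the colouring data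
of each strip. -/
def StripConfig (n : ℕ) (m : Fin n → Bool) : Type :=
  {y : Fin (n + 1) → EReal // Monotone y ∧ y 0 = ⊥ ∧ y (Fin.last n) = ⊤} ×
    ((i : Fin n) → StripData (m i))

noncomputable instance (n : ℕ) (m : Fin n → Bool) : TopologicalSpace (StripConfig n m) :=
  inferInstanceAs (TopologicalSpace
    ({y : Fin (n + 1) → EReal // Monotone y ∧ y 0 = ⊥ ∧ y (Fin.last n) = ⊤} ×
      ((i : Fin n) → StripData (m i))))

/-- Two configurations are identified when they have the same strip boundaries and agree
on the data of every nondegenerate strip (the data of a strip of zero width is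
immaterial). -/
def stripSetoid (n : ℕ) (m : Fin n → Bool) : Setoid (StripConfig n m) where
  r p q := p.1 = q.1 ∧
    ∀ i : Fin n, p.1.1 i.castSucc ≠ p.1.1 i.succ → p.2 i = q.2 i
  iseqv := by
    constructor
    · exact fun p => ⟨rfl, fun i _ => rfl⟩
    · rintro p q ⟨h1, h2⟩
      refine ⟨h1.symm, fun i hi => ?_⟩
      rw [← h1] at hi
      exact (h2 i hi).symm
    · rintro p q r ⟨h1, h2⟩ ⟨h3, h4⟩
      refine ⟨h1.trans h3, fun i hi => ?_⟩
      refine (h2 i hi).trans (h4 i ?_)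
      rwa [← h1]

/-- The space `C_M` of two-coloured strip partitions of `ℝ²` described by the
`(0,1)`-vector `M = m`. -/
def StripPartitionSpace (n : ℕ) (m : Fin n → Bool) : Type :=
  Quotient (stripSetoid n m)

noncomputable instance (n : ℕ) (m : Fin n → Bool) : TopologicalSpace (StripPartitionSpace n m) :=
  inferInstanceAs (TopologicalSpace (Quotient (stripSetoid n m)))

/-- Swapping the two colours `A` and `B` of a configuration. -/
noncomputable def stripConfigFlip (n : ℕ) (m : Fin n → Bool) (p : StripConfig n m) : StripConfig n m :=
  (p.1, fun i => stripFlip (m i) (p.2 i))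


section Aux
open Set Metric Finset


noncomputable def F (x : EReal) : Set.Icc (0:ℝ) 1 :=
  EReal.rec ⟨0, le_rfl, zero_le_one⟩
    (fun a => ⟨((orderIsoIooNegOneOne ℝ a : ℝ) + 1) / 2, by
      obtain ⟨h1, h2⟩ := (orderIsoIooNegOneOne ℝ a).2
      constructor <;> [linarith; linarith]⟩)
    ⟨1, zero_le_one, le_rfl⟩ x

lemma F_bot : (F ⊥ : ℝ) = 0 := rfl
lemma F_top : (F ⊤ : ℝ) = 1 := rfl
lemma F_coe (a : ℝ) : (F a : ℝ) = ((orderIsoIooNegOneOne ℝ a : ℝ) + 1) / 2 := rfl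

lemma F_coe_mem (a : ℝ) : (F a : ℝ) ∈ Set.Ioo (0:ℝ) 1 := by
  rw [F_coe]
  obtain ⟨h1, h2⟩ := (orderIsoIooNegOneOne ℝ a).2
  constructor <;> linarith

lemma F_strictMono : StrictMono F := by
  intro x y h
  rw [← Subtype.coe_lt_coe]
  induction x using EReal.rec with
  | bot =>
    induction y using EReal.rec with
    | bot => exact absurd h (lt_irrefl _)
    | coe b => rw [F_bot]; exact (F_coe_mem b).1
    | top => rw [F_bot, F_top]; norm_num
  | coe a =>
    induction y using EReal.rec with
    | bot => exact absurd h (by simp)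
    | coe b =>
      rw [F_coe, F_coe]
      have : a < b := EReal.coe_lt_coe_iff.1 h
      have := (orderIsoIooNegOneOne ℝ).strictMono this
      rw [← Subtype.coe_lt_coe] at this
      linarith
    | top => rw [F_top]; exact (F_coe_mem a).2
  | top => exact absurd h (by simp)

lemma F_surjective : Function.Surjective F := by
  rintro ⟨z, hz0, hz1⟩
  rcases eq_or_lt_of_le hz0 with h0 | h0
  · exact ⟨⊥, Subtype.ext h0⟩
  rcases eq_or_lt_of_le hz1 with h1 | h1
  · exact ⟨⊤, Subtype.ext h1.symm⟩
  refine ⟨((orderIsoIooNegOneOne ℝ).symm ⟨2*z - 1, by constructor <;> linarith⟩ : ℝ),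
    Subtype.ext ?_⟩
  rw [F_coe, OrderIso.apply_symm_apply]
  norm_num

noncomputable def FO : EReal ≃o Set.Icc (0:ℝ) 1 :=
  F_strictMono.orderIsoOfSurjective _ F_surjective

lemma FO_eq_F : ⇑FO = F := rfl

noncomputable def fv (x : EReal) : ℝ := (FO x : ℝ)

lemma continuous_fv : Continuous fv :=
  continuous_subtype_val.comp FO.toHomeomorph.continuous

lemma fv_strictMono : StrictMono fv := fun _ _ h => Subtype.coe_lt_coe.2 (F_strictMono h)
lemma fv_mono : Monotone fv := fv_strictMono.monotone
lemma fv_inj : Function.Injective fv := fun a b h => FO.injective (Subtype.ext h)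
lemma fv_bot : fv ⊥ = 0 := rfl
lemma fv_top : fv ⊤ = 1 := rfl
lemma fv_surj (z : ℝ) (h0 : 0 ≤ z) (h1 : z ≤ 1) : ∃ x, fv x = z :=
  ⟨FO.symm ⟨z, h0, h1⟩, by simp [fv]⟩
def V : Bool → Type
  | true => ℂ
  | false => ℝ

noncomputable instance : ∀ b, NormedAddCommGroup (V b)
  | true => inferInstanceAs (NormedAddCommGroup ℂ)
  | false => inferInstanceAs (NormedAddCommGroup ℝ)

noncomputable instance : ∀ b, InnerProductSpace ℝ (V b)
  | true => inferInstanceAs (InnerProductSpace ℝ ℂ)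
  | false => inferInstanceAs (InnerProductSpace ℝ ℝ)

instance : ∀ b, FiniteDimensional ℝ (V b)
  | true => inferInstanceAs (FiniteDimensional ℝ ℂ)
  | false => inferInstanceAs (FiniteDimensional ℝ ℝ)

instance : ∀ b, Nonempty (StripData b)
  | true => ⟨⟨1, by simp⟩⟩
  | false => ⟨true⟩

lemma finrank_V (b : Bool) : Module.finrank ℝ (V b) = if b then 2 else 1 := by
  cases b
  · exact Module.finrank_self ℝ
  · exact Complex.finrank_real_complex

noncomputable def iota : (b : Bool) → StripData b → V b
  | true, z => show ℂ from ((show Metric.sphere (0:ℂ) 1 from z) : ℂ)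
  | false, c => show ℝ from cond (show Bool from c) 1 (-1)

lemma norm_iota (b : Bool) (u : StripData b) : ‖iota b u‖ = 1 := by
  cases b
  · cases u
    · show ‖(-1:ℝ)‖ = 1; norm_num
    · show ‖(1:ℝ)‖ = 1; norm_num
  · exact mem_sphere_zero_iff_norm.1 (show Metric.sphere (0:ℂ) 1 from u).2

lemma iota_flip (b : Bool) (u : StripData b) : iota b (stripFlip b u) = -(iota b u) := by
  cases b
  · cases u
    · show (1:ℝ) = -(-1:ℝ); norm_num
    · show (-1:ℝ) = -(1:ℝ); norm_num
  · rfl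

lemma iota_inj (b : Bool) : Function.Injective (iota b) := by
  cases b
  · intro u v h
    cases u <;> cases v
    · rfl
    · exact absurd (show (-1:ℝ) = 1 from h) (by norm_num)
    · exact absurd (show (1:ℝ) = -1 from h) (by norm_num)
    · rfl
  · intro u v h
    exact Subtype.ext h

instance : DiscreteTopology (StripData false) := inferInstanceAs (DiscreteTopology Bool)

lemma iota_continuous (b : Bool) : Continuous (iota b) := by
  cases b
  · exact continuous_of_discreteTopology
  · exact continuous_subtype_val

lemma iota_surj (b : Bool) (v : V b) (hv : ‖v‖ = 1) : ∃ u, iota b u = v := by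
  cases b
  · rcases (abs_eq (by norm_num : (0:ℝ) ≤ 1)).1 (by rw [← Real.norm_eq_abs]; exact hv) with h | h
    · exact ⟨show StripData false from true, h.symm⟩
    · exact ⟨show StripData false from false, h.symm⟩
  · exact ⟨⟨v, mem_sphere_zero_iff_norm.2 hv⟩, rfl⟩


section Main
variable {n : ℕ} {m : Fin n → Bool}

noncomputable def dd (p : StripConfig n m) (i : Fin n) : ℝ :=
  fv (p.1.1 i.succ) - fv (p.1.1 i.castSucc)

lemma dd_nonneg (p : StripConfig n m) (i : Fin n) : 0 ≤ dd p i :=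
  sub_nonneg.2 (fv_mono (p.1.2.1 (Fin.castSucc_le_succ i)))

noncomputable def phi (p : StripConfig n m) : PiLp 2 (fun i : Fin n => V (m i)) :=
  (WithLp.equiv 2 _).symm fun i => Real.sqrt (dd p i) • iota (m i) (p.2 i)

lemma phi_apply (p : StripConfig n m) (i : Fin n) :
    phi p i = Real.sqrt (dd p i) • iota (m i) (p.2 i) := rfl

lemma telescope {n : ℕ} (Y : Fin (n+1) → ℝ) :
    ∑ i : Fin n, (Y i.succ - Y i.castSucc) = Y (Fin.last n) - Y 0 := by
  rw [Finset.sum_sub_distrib]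
  have h1 := Fin.sum_univ_succ Y
  have h2 := Fin.sum_univ_castSucc Y
  linarith

lemma phi_norm (p : StripConfig n m) : ‖phi p‖ = 1 := by
  have h2 : ‖phi p‖^2 = 1 := by
    rw [PiLp.norm_sq_eq_of_L2]
    have hc : ∀ i ∈ Finset.univ, ‖phi p i‖^2 = fv (p.1.1 i.succ) - fv (p.1.1 i.castSucc) := by
      intro i _
      rw [phi_apply, norm_smul, norm_iota, mul_one, Real.norm_eq_abs,
        abs_of_nonneg (Real.sqrt_nonneg _), Real.sq_sqrt (dd_nonneg p i)]
      rfl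
    rw [Finset.sum_congr rfl hc]
    exact (telescope fun k => fv (p.1.1 k)).trans
      (by rw [p.1.2.2.2, p.1.2.2.1, fv_top, fv_bot]; norm_num)
  calc ‖phi p‖ = Real.sqrt (‖phi p‖^2) := (Real.sqrt_sq (norm_nonneg _)).symm
  _ = 1 := by rw [h2, Real.sqrt_one]

lemma phi_respects (p q : StripConfig n m) (h : (stripSetoid n m).r p q) : phi p = phi q := by
  obtain ⟨h1, h2⟩ := h
  ext i
  by_cases hd : p.1.1 i.castSucc = p.1.1 i.succ
  · have hdq : q.1.1 i.castSucc = q.1.1 i.succ := by rw [← h1]; exact hd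
    rw [phi_apply, phi_apply]
    rw [show dd p i = 0 by rw [dd, hd, sub_self], show dd q i = 0 by rw [dd, hdq, sub_self]]
    rw [Real.sqrt_zero, zero_smul, zero_smul]
  · rw [phi_apply, phi_apply, show dd q i = dd p i by rw [dd, dd, h1], h2 i hd]

lemma phi_inj (p q : StripConfig n m) (h : phi p = phi q) : (stripSetoid n m).r p q := by
  have hdd : ∀ i, dd p i = dd q i := by
    intro i
    have hi : phi p i = phi q i := congr_fun (congrArg WithLp.ofLp h) i
    have hn : ‖phi p i‖ = ‖phi q i‖ := by rw [hi]
    rw [phi_apply, phi_apply, norm_smul, norm_smul, norm_iota, norm_iota,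
      Real.norm_eq_abs, Real.norm_eq_abs, abs_of_nonneg (Real.sqrt_nonneg _),
      abs_of_nonneg (Real.sqrt_nonneg _)] at hn
    have := congrArg (· ^ 2) hn
    simpa [Real.sq_sqrt (dd_nonneg p i), Real.sq_sqrt (dd_nonneg q i)] using this
  have hy : p.1.1 = q.1.1 := by
    funext k
    induction k using Fin.induction with
    | zero => rw [p.1.2.2.1, q.1.2.2.1]
    | succ i ih =>
      apply fv_inj
      have hp : fv (p.1.1 i.succ) = fv (p.1.1 i.castSucc) + dd p i := by rw [dd]; ring
      have hq : fv (q.1.1 i.succ) = fv (q.1.1 i.castSucc) + dd q i := by rw [dd]; ring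
      rw [hp, hq, ih, hdd i]
  have h1 : p.1 = q.1 := Subtype.ext hy
  refine ⟨h1, fun i hne => ?_⟩
  have hne' : dd p i ≠ 0 := by
    intro h0
    exact hne (fv_inj (by rw [dd] at h0; linarith))
  have hdpos : 0 < dd p i := (dd_nonneg p i).lt_of_ne (Ne.symm hne')
  have hcomp := congr_fun (congrArg WithLp.ofLp h) i
  rw [phi_apply, phi_apply, ← hdd i] at hcomp
  have hs : Real.sqrt (dd p i) ≠ 0 := by positivity
  exact iota_inj _ (smul_right_injective (V (m i)) hs hcomp)

lemma filter_lt_succ {n : ℕ} (k : Fin n) :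
    (Finset.univ.filter (fun i : Fin n => (i:ℕ) < (k:ℕ)+1))
      = insert k (Finset.univ.filter fun i : Fin n => (i:ℕ) < (k:ℕ)) := by
  ext i
  simp [Fin.ext_iff]
  omega

lemma phi_surj (v : PiLp 2 fun i : Fin n => V (m i)) (hv : ‖v‖ = 1) :
    ∃ p : StripConfig n m, phi p = v := by
  classical
  set c : ℕ → ℝ := fun k => ∑ i ∈ Finset.univ.filter (fun i : Fin n => (i:ℕ) < k), ‖v i‖^2
    with hc
  have hc0 : c 0 = 0 := by simp [hc]
  have hcn : c n = 1 := by
    have : (Finset.univ.filter fun i : Fin n => (i:ℕ) < n) = Finset.univ := by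
      ext i; simp [i.isLt]
    rw [hc]
    simp only [this]
    rw [← PiLp.norm_sq_eq_of_L2, hv, one_pow]
  have hmono : Monotone c := by
    intro a b hab
    apply Finset.sum_le_sum_of_subset_of_nonneg
    · intro i hi
      simp only [Finset.mem_filter, Finset.mem_univ, true_and] at hi ⊢
      omega
    · intro i _ _; positivity
  have hmem : ∀ k : Fin (n+1), c k ∈ Set.Icc (0:ℝ) 1 := by
    intro k
    constructor
    · rw [← hc0]; exact hmono (Nat.zero_le _)
    · rw [← hcn]; exact hmono (Nat.lt_succ_iff.1 k.isLt)
  let y : Fin (n+1) → EReal := fun k => FO.symm ⟨c k, hmem k⟩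
  have hfvy : ∀ k, fv (y k) = c k := by
    intro k
    show ((FO (FO.symm ⟨c k, hmem k⟩)) : ℝ) = c k
    rw [OrderIso.apply_symm_apply]
  have hymono : Monotone y := by
    intro a b hab
    exact FO.symm.monotone (Subtype.mk_le_mk.2 (hmono hab))
  have hy0 : y 0 = ⊥ := by
    show FO.symm _ = ⊥
    rw [OrderIso.symm_apply_eq]
    apply Subtype.ext
    show c ((0 : Fin (n+1)) : ℕ) = ((FO ⊥ : Set.Icc (0:ℝ) 1) : ℝ)
    rw [show ((FO ⊥ : Set.Icc (0:ℝ) 1) : ℝ) = 0 from rfl, Fin.val_zero]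
    exact hc0
  have hylast : y (Fin.last n) = ⊤ := by
    show FO.symm _ = ⊤
    rw [OrderIso.symm_apply_eq]
    apply Subtype.ext
    show c ((Fin.last n : Fin (n+1)) : ℕ) = ((FO ⊤ : Set.Icc (0:ℝ) 1) : ℝ)
    rw [show ((FO ⊤ : Set.Icc (0:ℝ) 1) : ℝ) = 1 from rfl, Fin.val_last]
    exact hcn
  have hcs : ∀ i : Fin n, c ((i:ℕ)+1) = ‖v i‖^2 + c i := by
    intro i
    rw [hc]
    simp only
    rw [filter_lt_succ i, Finset.sum_insert (by simp)]
  have hnorm1 : ∀ i : Fin n, v i ≠ 0 → ‖‖v i‖⁻¹ • v i‖ = 1 := by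
    intro i h
    rw [norm_smul, norm_inv, norm_norm]
    exact inv_mul_cancel₀ (norm_ne_zero_iff.2 h)
  let u : ∀ i : Fin n, StripData (m i) := fun i =>
    if h : v i = 0 then Classical.arbitrary _
    else Classical.choose (iota_surj (m i) (‖v i‖⁻¹ • v i) (hnorm1 i h))
  refine ⟨⟨⟨y, hymono, hy0, hylast⟩, u⟩, ?_⟩
  ext i
  have hddi : dd (⟨⟨y, hymono, hy0, hylast⟩, u⟩ : StripConfig n m) i = ‖v i‖^2 := by
    unfold dd
    show fv (y i.succ) - fv (y i.castSucc) = _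
    rw [hfvy, hfvy, Fin.val_succ, Fin.coe_castSucc, hcs i]
    ring
  show Real.sqrt (dd (⟨⟨y, hymono, hy0, hylast⟩, u⟩ : StripConfig n m) i) • iota (m i) (u i) = v i
  rw [hddi, Real.sqrt_sq (norm_nonneg _)]
  by_cases h : v i = 0
  · rw [h, norm_zero, zero_smul]
  · show ‖v i‖ • iota (m i) (u i) = v i
    have hu : u i = Classical.choose (iota_surj (m i) (‖v i‖⁻¹ • v i) (hnorm1 i h)) :=
      dif_neg h
    have hui := Classical.choose_spec (iota_surj (m i) (‖v i‖⁻¹ • v i) (hnorm1 i h))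
    rw [hu, hui, smul_smul, mul_inv_cancel₀ (norm_ne_zero_iff.2 h), one_smul]

lemma phi_continuous : Continuous (phi (n := n) (m := m)) := by
  apply Continuous.comp (PiLp.continuous_toLp 2 _)
  apply continuous_pi
  intro i
  apply Continuous.smul
  · apply Real.continuous_sqrt.comp
    apply Continuous.sub
    · exact continuous_fv.comp ((continuous_apply _).comp
        (continuous_subtype_val.comp continuous_fst))
    · exact continuous_fv.comp ((continuous_apply _).comp
        (continuous_subtype_val.comp continuous_fst))
  · exact (iota_continuous _).comp ((continuous_apply i).comp continuous_snd)

lemma phi_flip (p : StripConfig n m) : phi (stripConfigFlip n m p) = - phi p := by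
  ext i
  show Real.sqrt (dd (stripConfigFlip n m p) i) • iota (m i) (stripFlip (m i) (p.2 i))
    = -(Real.sqrt (dd p i) • iota (m i) (p.2 i))
  have hdd : dd (stripConfigFlip n m p) i = dd p i := rfl
  rw [hdd, iota_flip, smul_neg]

instance : FiniteDimensional ℝ (PiLp 2 fun i : Fin n => V (m i)) :=
  (WithLp.linearEquiv 2 ℝ _).symm.finiteDimensional

lemma finrank_E : Module.finrank ℝ (PiLp 2 fun i : Fin n => V (m i))
    = n + (Finset.univ.filter fun i => m i = true).card := by
  rw [(WithLp.linearEquiv 2 ℝ _).finrank_eq, Module.finrank_pi_fintype]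
  have hstep : ∀ i ∈ Finset.univ, Module.finrank ℝ (V (m i))
      = 1 + if m i = true then 1 else 0 := by
    intro i _
    rw [finrank_V]
    by_cases h : m i <;> simp [h]
  rw [Finset.sum_congr rfl hstep, Finset.sum_add_distrib, Finset.sum_const,
    Finset.card_univ, Fintype.card_fin, smul_eq_mul, mul_one]
  congr 1
  rw [Finset.sum_boole, Nat.cast_id]

instance : CompactSpace {y : Fin (n + 1) → EReal // Monotone y ∧ y 0 = ⊥ ∧ y (Fin.last n) = ⊤} := by
  have h1 : IsClosed {y : Fin (n+1) → EReal | Monotone y} := by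
    have : {y : Fin (n+1) → EReal | Monotone y}
        = ⋂ (p : Fin (n+1) × Fin (n+1)) (_ : p.1 ≤ p.2), {y | y p.1 ≤ y p.2} := by
      ext y
      simp only [Set.mem_setOf_eq, Set.mem_iInter]
      exact ⟨fun h p hp => h hp, fun h a b hab => h (a, b) hab⟩
    rw [this]
    exact isClosed_iInter fun p => isClosed_iInter fun hp =>
      isClosed_le (continuous_apply _) (continuous_apply _)
  have h2 : IsClosed {y : Fin (n+1) → EReal | y 0 = ⊥} :=
    isClosed_eq (continuous_apply _) continuous_const
  have h3 : IsClosed {y : Fin (n+1) → EReal | y (Fin.last n) = ⊤} :=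
    isClosed_eq (continuous_apply _) continuous_const
  have hcl : IsClosed {y : Fin (n+1) → EReal | Monotone y ∧ y 0 = ⊥ ∧ y (Fin.last n) = ⊤} :=
    h1.inter (h2.inter h3)
  exact isCompact_iff_compactSpace.mp hcl.isCompact

instance : ∀ b, CompactSpace (StripData b)
  | true => inferInstanceAs (CompactSpace (Metric.sphere (0:ℂ) 1))
  | false => inferInstanceAs (CompactSpace Bool)

instance : CompactSpace (StripConfig n m) :=
  inferInstanceAs (CompactSpace (_ × _))

instance : CompactSpace (StripPartitionSpace n m) :=
  inferInstanceAs (CompactSpace (Quotient _))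

end Main
end Aux

/-- For a `(0,1)`-vector `M` of length `n` with `w(M)` ones and `t = n + w(M)`, the space
`C_M` is `ℤ/2`-equivariantly homeomorphic to the sphere `S^{t-1}`, where the `ℤ/2`-action
swaps the two colours on `C_M` and is the antipodal action on the sphere. -/
theorem stripPartitionSpace_homeo_sphere (n : ℕ) (hn : 1 ≤ n) (m : Fin n → Bool)
    (t : ℕ) (ht : t = n + (Finset.univ.filter fun i => m i = true).card) :
    ∃ h : StripPartitionSpace n m ≃ₜ Metric.sphere (0 : EuclideanSpace ℝ (Fin t)) 1,
      ∀ p : StripConfig n m,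
        h (Quotient.mk (stripSetoid n m) (stripConfigFlip n m p)) =
          -(h (Quotient.mk (stripSetoid n m) p)) := by
  classical
  have hrank : Module.finrank ℝ (PiLp 2 fun i : Fin n => V (m i)) = t := by
    rw [finrank_E, ht]
  let L : (PiLp 2 fun i : Fin n => V (m i)) ≃ₗᵢ[ℝ] EuclideanSpace ℝ (Fin t) :=
    (stdOrthonormalBasis ℝ _).repr.trans
      (LinearIsometryEquiv.piLpCongrLeft 2 ℝ ℝ (finCongr hrank))
  let Ψ0 : StripConfig n m → Metric.sphere (0 : EuclideanSpace ℝ (Fin t)) 1 :=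
    fun p => ⟨L (phi p), by
      rw [mem_sphere_zero_iff_norm, L.norm_map, phi_norm]⟩
  have hresp : ∀ p q : StripConfig n m, (stripSetoid n m).r p q → Ψ0 p = Ψ0 q :=
    fun p q h => Subtype.ext (by show L (phi p) = L (phi q); rw [phi_respects p q h])
  let Ψ : StripPartitionSpace n m → Metric.sphere (0 : EuclideanSpace ℝ (Fin t)) 1 :=
    Quotient.lift Ψ0 hresp
  have hcont : Continuous Ψ :=
    Continuous.quotient_lift ((L.continuous.comp phi_continuous).subtype_mk _) hresp
  have hinj : Function.Injective Ψ := by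
    intro a b
    refine Quotient.inductionOn₂ a b fun p q h => ?_
    apply Quotient.sound
    apply phi_inj
    exact L.injective (congrArg Subtype.val h)
  have hsurjPsi : Function.Surjective Ψ := by
    intro w
    have hw : ‖L.symm (w : EuclideanSpace ℝ (Fin t))‖ = 1 := by
      rw [L.symm.norm_map, mem_sphere_zero_iff_norm.1 w.2]
    obtain ⟨p, hp⟩ := phi_surj _ hw
    refine ⟨Quotient.mk _ p, Subtype.ext ?_⟩
    show L (phi p) = (w : EuclideanSpace ℝ (Fin t))
    rw [hp, L.apply_symm_apply]
  let e : StripPartitionSpace n m ≃ Metric.sphere (0 : EuclideanSpace ℝ (Fin t)) 1 :=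
    Equiv.ofBijective Ψ ⟨hinj, hsurjPsi⟩
  refine ⟨hcont.homeoOfEquivCompactToT2 (f := e), fun p => ?_⟩
  apply Subtype.ext
  show L (phi (stripConfigFlip n m p)) = ((-(Ψ0 p) : Metric.sphere (0 : EuclideanSpace ℝ (Fin t)) 1) : EuclideanSpace ℝ (Fin t))
  rw [coe_neg_sphere]
  show _ = -(L (phi p))
  rw [phi_flip, map_neg]
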